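/- Let d ∈ ℕ, d ≥ 1, let α > 5/2 be real, and let v̂ : ℤ^d → ℂ satisfy ‖v̂‖_α := (Σ_{h ∈ ℤ^d} |v̂(h)|² r_α(h)²)^{1/2} < ∞. Then Σ_{h ∈ ℤ^d} ‖h‖₂² |v̂(h)| ≤ d · (1 + 2ζ(2α − 4))^{d/2} · ‖v̂‖_α, where ‖h‖₂ is the Euclidean norm of h; in particular the left-hand side is finite. -/
import Mathlib

noncomputable section

open scoped ENNReal

/-- The squared Korobov weight `r_α(h)² = ∏_j max(|h_j|^(2α), 1)`. -/
def korWeightSq {d : ℕ} (α : ℝ) (h : Fin d → ℤ) : ℝ :=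
  ∏ j, max (|(h j : ℝ)| ^ (2 * α)) 1

/-- The squared Euclidean norm `‖h‖₂² = Σ_j h_j²` of `h ∈ ℤ^d`. -/
def normSq {d : ℕ} (h : Fin d → ℤ) : ℝ := ∑ j, (h j : ℝ) ^ 2

/-- The Riemann zeta function at a real argument `s`, `ζ(s) = Σ_{m ≥ 1} m^{-s}`. -/
def zetaR (s : ℝ) : ℝ := ∑' m : ℕ, 1 / ((m : ℝ) + 1) ^ s

/-- tsum over a finite pi type of a product of one-variable functions factorizes. -/
lemma tsum_pi_prod : ∀ {d : ℕ} (g : Fin d → ℤ → ℝ≥0∞),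
    ∑' h : Fin d → ℤ, ∏ j, g j (h j) = ∏ j, ∑' m : ℤ, g j m := by
  intro d
  induction d with
  | zero =>
    intro g
    simp only [Finset.univ_eq_empty, Finset.prod_empty]
    exact tsum_eq_single (default : Fin 0 → ℤ)
      (fun b hb => absurd (Subsingleton.elim b default) hb)
  | succ n ih =>
    intro g
    calc ∑' h : Fin (n+1) → ℤ, ∏ j, g j (h j)
        = ∑' p : ℤ × (Fin n → ℤ), ∏ j, g j ((Fin.cons p.1 p.2 : Fin (n+1) → ℤ) j) := by
          rw [← ((Fin.consEquiv (fun _ : Fin (n+1) => ℤ)).tsum_eq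
            (fun h : Fin (n+1) → ℤ => ∏ j, g j (h j)))]
          exact tsum_congr fun p => by simp [Fin.consEquiv]
      _ = ∑' (a : ℤ) (b : Fin n → ℤ), ∏ j, g j ((Fin.cons a b : Fin (n+1) → ℤ) j) := ENNReal.tsum_prod'
      _ = ∑' (a : ℤ) (b : Fin n → ℤ), g 0 a * ∏ j : Fin n, g j.succ (b j) := by
          refine tsum_congr fun a => tsum_congr fun b => ?_
          rw [Fin.prod_univ_succ, Fin.cons_zero]
          exact congrArg _ (Finset.prod_congr rfl fun j _ => by rw [Fin.cons_succ])
      _ = (∑' a : ℤ, g 0 a) * ∑' b : Fin n → ℤ, ∏ j : Fin n, g j.succ (b j) := by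
          simp_rw [ENNReal.tsum_mul_left, ENNReal.tsum_mul_right]
      _ = ∏ j : Fin (n+1), ∑' m, g j m := by
          rw [ih (fun j => g j.succ), Fin.prod_univ_succ]

lemma one_le_prod_real {ι : Type*} (s : Finset ι) (f : ι → ℝ)
    (hf : ∀ i ∈ s, 1 ≤ f i) : 1 ≤ ∏ i ∈ s, f i := by
  calc (1 : ℝ) = ∏ _i ∈ s, (1 : ℝ) := by simp
    _ ≤ ∏ i ∈ s, f i := Finset.prod_le_prod (fun _ _ => zero_le_one) hf

lemma single_le_prod_real {ι : Type*} [DecidableEq ι] (s : Finset ι) (f : ι → ℝ)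
    (hf : ∀ i ∈ s, 1 ≤ f i) {j : ι} (hj : j ∈ s) : f j ≤ ∏ i ∈ s, f i := by
  rw [← Finset.mul_prod_erase s f hj]
  exact le_mul_of_one_le_right (le_trans zero_le_one (hf j hj))
    (one_le_prod_real _ _ fun i hi => hf i (Finset.mem_of_mem_erase hi))

/-- The single-coordinate comparison function. -/
def korG (α : ℝ) (m : ℤ) : ℝ :=
  max (((m : ℝ) ^ 2) ^ 2) 1 / max (|(m : ℝ)| ^ (2 * α)) 1

lemma korG_nonneg (α : ℝ) (m : ℤ) : 0 ≤ korG α m :=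
  div_nonneg (le_trans zero_le_one (le_max_right _ _))
    (le_trans zero_le_one (le_max_right _ _))

lemma korG_zero (α : ℝ) (hα : 0 < α) : korG α 0 = 1 := by
  have : (2 * α) ≠ 0 := by positivity
  simp [korG, Real.zero_rpow this]

lemma korG_of_one_le (α : ℝ) (hα : 5 / 2 < α) {m : ℤ} (hm : 1 ≤ |(m : ℝ)|) :
    korG α m = 1 / |(m : ℝ)| ^ (2 * α - 4) := by
  have hpos : (0 : ℝ) < |(m : ℝ)| := lt_of_lt_of_le zero_lt_one hm
  have h1 : ((m : ℝ) ^ 2) ^ 2 = |(m : ℝ)| ^ (4 : ℕ) := by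
    have h4 : |(m : ℝ)| ^ (4 : ℕ) = |(m : ℝ) ^ (4 : ℕ)| := (abs_pow _ _).symm
    rw [h4, abs_of_nonneg (by positivity : (0:ℝ) ≤ (m : ℝ) ^ (4 : ℕ))]
    ring
  have h2 : max (((m : ℝ) ^ 2) ^ 2) 1 = |(m : ℝ)| ^ (4 : ℕ) := by
    rw [h1]
    exact max_eq_left (one_le_pow₀ hm)
  have h3 : max (|(m : ℝ)| ^ (2 * α)) 1 = |(m : ℝ)| ^ (2 * α) :=
    max_eq_left (Real.one_le_rpow hm (by linarith))
  have h4 : |(m : ℝ)| ^ (2 * α) = |(m : ℝ)| ^ (4 : ℕ) * |(m : ℝ)| ^ (2 * α - 4) := by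
    rw [← Real.rpow_natCast _ 4, ← Real.rpow_add hpos]
    norm_num
  have h5 : |(m : ℝ)| ^ (4 : ℕ) ≠ 0 := by positivity
  rw [korG, h2, h3, h4]
  field_simp

lemma summable_one_div_nat_add_one_rpow {p : ℝ} (hp : 1 < p) :
    Summable (fun n : ℕ => 1 / ((n : ℝ) + 1) ^ p) := by
  have h := (Real.summable_one_div_nat_rpow.2 hp).comp_injective
    (add_left_injective 1)
  refine h.congr fun n => ?_
  simp only [Function.comp]
  push_cast
  ring_nf

lemma zetaR_nonneg {p : ℝ} : 0 ≤ zetaR p :=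
  tsum_nonneg fun n => by positivity

lemma korG_int_succ (α : ℝ) (hα : 5 / 2 < α) (n : ℕ) :
    korG α ((n : ℤ) + 1) = 1 / ((n : ℝ) + 1) ^ (2 * α - 4) ∧
    korG α (-((n : ℤ) + 1)) = 1 / ((n : ℝ) + 1) ^ (2 * α - 4) := by
  have h1 : |(((n : ℤ) + 1 : ℤ) : ℝ)| = (n : ℝ) + 1 := by
    push_cast
    rw [abs_of_pos]; positivity
  have h2 : |((-((n : ℤ) + 1) : ℤ) : ℝ)| = (n : ℝ) + 1 := by
    push_cast
    rw [abs_neg, abs_of_pos]; positivity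
  have hm1 : (1 : ℝ) ≤ |(((n : ℤ) + 1 : ℤ) : ℝ)| := by rw [h1]; simp
  have hm2 : (1 : ℝ) ≤ |((-((n : ℤ) + 1) : ℤ) : ℝ)| := by rw [h2]; simp
  exact ⟨by rw [korG_of_one_le α hα hm1, h1], by rw [korG_of_one_le α hα hm2, h2]⟩

lemma korG_summable (α : ℝ) (hα : 5 / 2 < α) : Summable (korG α) := by
  have hp : (1 : ℝ) < 2 * α - 4 := by linarith
  have hz := summable_one_div_nat_add_one_rpow hp
  have h1 : Summable (fun n : ℕ => korG α n) := by
    rw [← summable_nat_add_iff 1]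
    refine hz.congr fun n => ?_
    push_cast
    rw [← (korG_int_succ α hα n).1]
  have h2 : Summable (fun n : ℕ => korG α (-((n : ℤ) + 1))) :=
    hz.congr fun n => ((korG_int_succ α hα n).2).symm
  exact Summable.of_nat_of_neg_add_one h1 h2

lemma korG_tsum (α : ℝ) (hα : 5 / 2 < α) :
    ∑' m : ℤ, korG α m = 1 + 2 * zetaR (2 * α - 4) := by
  have hp : (1 : ℝ) < 2 * α - 4 := by linarith
  have hz := summable_one_div_nat_add_one_rpow hp
  have h1 : Summable (fun n : ℕ => korG α n) := by
    rw [← summable_nat_add_iff 1]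
    refine hz.congr fun n => ?_
    push_cast
    rw [← (korG_int_succ α hα n).1]
  have h2 : Summable (fun n : ℕ => korG α (-((n : ℤ) + 1))) :=
    hz.congr fun n => ((korG_int_succ α hα n).2).symm
  rw [tsum_of_nat_of_neg_add_one h1 h2]
  have e1 : ∑' n : ℕ, korG α n = 1 + zetaR (2 * α - 4) := by
    rw [Summable.tsum_eq_zero_add h1]
    have h0 : korG α ((0 : ℕ) : ℤ) = 1 := by
      rw [Nat.cast_zero]; exact korG_zero α (by linarith)
    rw [h0]
    congr 1
    rw [zetaR]
    refine tsum_congr fun n => ?_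
    push_cast
    exact (korG_int_succ α hα n).1
  have e2 : ∑' n : ℕ, korG α (-((n : ℤ) + 1)) = zetaR (2 * α - 4) := by
    rw [zetaR]
    exact tsum_congr fun n => (korG_int_succ α hα n).2
  rw [e1, e2]; ring

/-- **Weighted summability of Korobov coefficients (first order).** For
`α > 5/2` and `‖v̂‖_α < ∞`,
`Σ_h ‖h‖₂² |v̂(h)| ≤ d (1 + 2ζ(2α−4))^{d/2} ‖v̂‖_α`; in particular the
left-hand side is finite. -/
theorem korobov_weighted_sum_sq
    (d : ℕ) (hd : 1 ≤ d) (α : ℝ) (hα : 5 / 2 < α)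
    (vhat : (Fin d → ℤ) → ℂ)
    (hsum : Summable fun h : Fin d → ℤ => ‖vhat h‖ ^ 2 * korWeightSq α h) :
    Summable (fun h : Fin d → ℤ => normSq h * ‖vhat h‖) ∧
    ∑' h : Fin d → ℤ, normSq h * ‖vhat h‖ ≤
      (d : ℝ) * (1 + 2 * zetaR (2 * α - 4)) ^ ((d : ℝ) / 2) *
        Real.sqrt (∑' h : Fin d → ℤ, ‖vhat h‖ ^ 2 * korWeightSq α h) := by
  set C : ℝ := 1 + 2 * zetaR (2 * α - 4) with hCdef
  have hC1 : (1 : ℝ) ≤ C := by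
    have := zetaR_nonneg (p := 2 * α - 4)
    simp only [hCdef]; linarith
  have hC0 : (0 : ℝ) ≤ C := le_trans zero_le_one hC1
  have hW1 : ∀ h : Fin d → ℤ, 1 ≤ korWeightSq α h := by
    intro h
    unfold korWeightSq
    exact one_le_prod_real _ _ fun j _ => le_max_right _ _
  have hWpos : ∀ h : Fin d → ℤ, 0 < korWeightSq α h :=
    fun h => lt_of_lt_of_le zero_lt_one (hW1 h)
  -- pointwise bound : h_j^4 / W h ≤ ∏_k korG (h k)
  have hpw : ∀ (h : Fin d → ℤ) (j : Fin d),
      (((h j : ℝ) ^ 2) ^ 2) / korWeightSq α h ≤ ∏ k, korG α (h k) := by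
    intro h j
    have hprod : ∏ k, korG α (h k)
        = (∏ k, max (((h k : ℝ) ^ 2) ^ 2) 1) / korWeightSq α h := by
      unfold korWeightSq korG
      rw [← Finset.prod_div_distrib]
    rw [hprod]
    gcongr
    · exact (hWpos h).le
    calc (((h j : ℝ) ^ 2) ^ 2) ≤ max (((h j : ℝ) ^ 2) ^ 2) 1 := le_max_left _ _
      _ ≤ ∏ k, max (((h k : ℝ) ^ 2) ^ 2) 1 :=
          single_le_prod_real Finset.univ (fun k => max (((h k : ℝ) ^ 2) ^ 2) 1)
            (fun k _ => le_max_right _ _) (Finset.mem_univ j)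
  -- per-coordinate ENNReal bound
  have hstep2 : ∀ j : Fin d,
      ∑' h : Fin d → ℤ, ENNReal.ofReal ((((h j : ℝ) ^ 2) ^ 2) / korWeightSq α h)
        ≤ ENNReal.ofReal (C ^ d) := by
    intro j
    calc ∑' h : Fin d → ℤ, ENNReal.ofReal ((((h j : ℝ) ^ 2) ^ 2) / korWeightSq α h)
        ≤ ∑' h : Fin d → ℤ, ENNReal.ofReal (∏ k, korG α (h k)) :=
          ENNReal.tsum_le_tsum fun h => ENNReal.ofReal_le_ofReal (hpw h j)
      _ = ∑' h : Fin d → ℤ, ∏ k, ENNReal.ofReal (korG α (h k)) := by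
          refine tsum_congr fun h => ?_
          exact ENNReal.ofReal_prod_of_nonneg fun k _ => korG_nonneg α (h k)
      _ = ∏ k : Fin d, ∑' m : ℤ, ENNReal.ofReal (korG α m) :=
          tsum_pi_prod (fun _ m => ENNReal.ofReal (korG α m))
      _ = ∏ k : Fin d, ENNReal.ofReal C := by
          refine Finset.prod_congr rfl fun k _ => ?_
          rw [← ENNReal.ofReal_tsum_of_nonneg (korG_nonneg α) (korG_summable α hα),
            korG_tsum α hα]
      _ = ENNReal.ofReal (C ^ d) := by
          rw [Finset.prod_const, Finset.card_univ, Fintype.card_fin,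
            ENNReal.ofReal_pow hC0]
  -- total ENNReal bound on (normSq)^2 / W
  set Asq : (Fin d → ℤ) → ℝ := fun h => (normSq h) ^ 2 / korWeightSq α h with hAsqdef
  have hAsq_nonneg : ∀ h, 0 ≤ Asq h := fun h =>
    div_nonneg (sq_nonneg _) (hWpos h).le
  have hpw2 : ∀ h : Fin d → ℤ, ENNReal.ofReal (Asq h)
      ≤ ∑ j : Fin d, ENNReal.ofReal ((d : ℝ) * ((((h j : ℝ) ^ 2) ^ 2) / korWeightSq α h)) := by
    intro h
    have h1 : Asq h ≤ ∑ j : Fin d, (d : ℝ) * ((((h j : ℝ) ^ 2) ^ 2) / korWeightSq α h) := by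
      have hcs : (normSq h) ^ 2 ≤ (d : ℝ) * ∑ j : Fin d, ((h j : ℝ) ^ 2) ^ 2 := by
        have := sq_sum_le_card_mul_sum_sq
          (s := (Finset.univ : Finset (Fin d))) (f := fun j => (h j : ℝ) ^ 2)
        simpa [normSq, Finset.card_univ] using this
      calc Asq h ≤ ((d : ℝ) * ∑ j : Fin d, ((h j : ℝ) ^ 2) ^ 2) / korWeightSq α h := by
            show (normSq h) ^ 2 / korWeightSq α h ≤ _
            gcongr
            exact (hWpos h).le
        _ = ∑ j : Fin d, (d : ℝ) * ((((h j : ℝ) ^ 2) ^ 2) / korWeightSq α h) := by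
            rw [Finset.mul_sum, Finset.sum_div]
            exact Finset.sum_congr rfl fun j _ => (mul_div_assoc _ _ _)
    calc ENNReal.ofReal (Asq h)
        ≤ ENNReal.ofReal (∑ j : Fin d, (d : ℝ) * ((((h j : ℝ) ^ 2) ^ 2) / korWeightSq α h)) :=
          ENNReal.ofReal_le_ofReal h1
      _ = ∑ j : Fin d, ENNReal.ofReal ((d : ℝ) * ((((h j : ℝ) ^ 2) ^ 2) / korWeightSq α h)) :=
          ENNReal.ofReal_sum_of_nonneg fun j _ =>
            mul_nonneg (Nat.cast_nonneg d) (div_nonneg (by positivity) (hWpos h).le)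
  have htot : ∑' h : Fin d → ℤ, ENNReal.ofReal (Asq h)
      ≤ ENNReal.ofReal ((d : ℝ) * ((d : ℝ) * C ^ d)) := by
    calc ∑' h : Fin d → ℤ, ENNReal.ofReal (Asq h)
        ≤ ∑' h : Fin d → ℤ, ∑ j : Fin d,
            ENNReal.ofReal ((d : ℝ) * ((((h j : ℝ) ^ 2) ^ 2) / korWeightSq α h)) :=
          ENNReal.tsum_le_tsum hpw2
      _ = ∑ j : Fin d, ∑' h : Fin d → ℤ,
            ENNReal.ofReal ((d : ℝ) * ((((h j : ℝ) ^ 2) ^ 2) / korWeightSq α h)) :=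
          Summable.tsum_finsetSum fun j _ => ENNReal.summable
      _ ≤ ∑ j : Fin d, ENNReal.ofReal ((d : ℝ) * C ^ d) := by
          refine Finset.sum_le_sum fun j _ => ?_
          calc ∑' h : Fin d → ℤ,
                ENNReal.ofReal ((d : ℝ) * ((((h j : ℝ) ^ 2) ^ 2) / korWeightSq α h))
              = ENNReal.ofReal (d : ℝ) * ∑' h : Fin d → ℤ,
                  ENNReal.ofReal ((((h j : ℝ) ^ 2) ^ 2) / korWeightSq α h) := by
                rw [← ENNReal.tsum_mul_left]
                refine tsum_congr fun h => ?_
                rw [ENNReal.ofReal_mul (Nat.cast_nonneg d)]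
            _ ≤ ENNReal.ofReal (d : ℝ) * ENNReal.ofReal (C ^ d) :=
                mul_le_mul_right (hstep2 j) _
            _ = ENNReal.ofReal ((d : ℝ) * C ^ d) :=
                (ENNReal.ofReal_mul (Nat.cast_nonneg d)).symm
      _ = ENNReal.ofReal ((d : ℝ) * ((d : ℝ) * C ^ d)) := by
          rw [Finset.sum_const, Finset.card_univ, Fintype.card_fin, nsmul_eq_mul,
            ← ENNReal.ofReal_natCast d, ← ENNReal.ofReal_mul (Nat.cast_nonneg d)]
  -- summability of Asq and real bound
  have hbound_nonneg : (0 : ℝ) ≤ (d : ℝ) * ((d : ℝ) * C ^ d) := by positivity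
  have hfin : ∑' h : Fin d → ℤ, ENNReal.ofReal (Asq h) ≠ ⊤ :=
    ne_top_of_le_ne_top ENNReal.ofReal_ne_top htot
  have hAsq_summable : Summable Asq := by
    have := ENNReal.summable_toReal hfin
    refine this.congr fun h => ?_
    rw [ENNReal.toReal_ofReal (hAsq_nonneg h)]
  have hAsq_tsum : ∑' h, Asq h ≤ (d : ℝ) * ((d : ℝ) * C ^ d) := by
    rw [← ENNReal.ofReal_le_ofReal_iff hbound_nonneg,
      ENNReal.ofReal_tsum_of_nonneg hAsq_nonneg hAsq_summable]
    exact htot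
  -- Cauchy-Schwarz setup
  set A : (Fin d → ℤ) → ℝ := fun h => normSq h / Real.sqrt (korWeightSq α h) with hAdef
  set B : (Fin d → ℤ) → ℝ := fun h => ‖vhat h‖ * Real.sqrt (korWeightSq α h) with hBdef
  have hsqrt_pos : ∀ h, 0 < Real.sqrt (korWeightSq α h) :=
    fun h => Real.sqrt_pos.2 (hWpos h)
  have hA2 : ∀ h, A h ^ 2 = Asq h := by
    intro h
    show (normSq h / Real.sqrt (korWeightSq α h)) ^ 2 = (normSq h) ^ 2 / korWeightSq α h
    rw [div_pow, Real.sq_sqrt (hWpos h).le]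
  have hB2 : ∀ h, B h ^ 2 = ‖vhat h‖ ^ 2 * korWeightSq α h := by
    intro h
    show (‖vhat h‖ * Real.sqrt (korWeightSq α h)) ^ 2 = ‖vhat h‖ ^ 2 * korWeightSq α h
    rw [mul_pow, Real.sq_sqrt (hWpos h).le]
  have hAB : ∀ h, A h * B h = normSq h * ‖vhat h‖ := by
    intro h
    show normSq h / Real.sqrt (korWeightSq α h) * (‖vhat h‖ * Real.sqrt (korWeightSq α h))
      = normSq h * ‖vhat h‖
    rw [div_mul_eq_mul_div, mul_comm (‖vhat h‖), ← mul_assoc, mul_assoc (normSq h),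
      mul_div_assoc, mul_div_cancel_left₀ _ (hsqrt_pos h).ne']
  have hnormSq_nonneg : ∀ h : Fin d → ℤ, 0 ≤ normSq h :=
    fun h => Finset.sum_nonneg fun j _ => sq_nonneg _
  have hA_nonneg : ∀ h, 0 ≤ A h := fun h => div_nonneg (hnormSq_nonneg h) (hsqrt_pos h).le
  have hB_nonneg : ∀ h, 0 ≤ B h := fun h => mul_nonneg (norm_nonneg _) (hsqrt_pos h).le
  have hB2_summable : Summable (fun h => B h ^ 2) := hsum.congr fun h => (hB2 h).symm
  have hA2_summable : Summable (fun h => A h ^ 2) := hAsq_summable.congr fun h => (hA2 h).symm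
  -- summability of the target
  have hf_summable : Summable (fun h : Fin d → ℤ => normSq h * ‖vhat h‖) := by
    refine Summable.of_nonneg_of_le
      (fun h => mul_nonneg (hnormSq_nonneg h) (norm_nonneg _))
      (fun h => ?_) ((hA2_summable.add hB2_summable).div_const 2)
    rw [← hAB h]
    nlinarith [sq_nonneg (A h - B h)]
  refine ⟨hf_summable, ?_⟩
  -- the bound
  have hkey : Real.sqrt (∑' h, A h ^ 2) ≤ (d : ℝ) * C ^ ((d : ℝ) / 2) := by
    have h1 : ∑' h, A h ^ 2 ≤ (d : ℝ) * ((d : ℝ) * C ^ d) := by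
      calc ∑' h, A h ^ 2 = ∑' h, Asq h := tsum_congr hA2
        _ ≤ _ := hAsq_tsum
    calc Real.sqrt (∑' h, A h ^ 2) ≤ Real.sqrt ((d : ℝ) * ((d : ℝ) * C ^ d)) :=
          Real.sqrt_le_sqrt h1
      _ = (d : ℝ) * C ^ ((d : ℝ) / 2) := by
          have : (d : ℝ) * ((d : ℝ) * C ^ d) = ((d : ℝ)) ^ 2 * C ^ d := by ring
          rw [this, Real.sqrt_mul (sq_nonneg _), Real.sqrt_sq (Nat.cast_nonneg d)]
          congr 1
          rw [Real.sqrt_eq_rpow, ← Real.rpow_natCast C d, ← Real.rpow_mul hC0]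
          congr 1
          ring
  refine Summable.tsum_le_of_sum_le hf_summable fun s => ?_
  calc ∑ h ∈ s, normSq h * ‖vhat h‖ = ∑ h ∈ s, A h * B h :=
        Finset.sum_congr rfl fun h _ => (hAB h).symm
    _ ≤ Real.sqrt (∑ h ∈ s, A h ^ 2) * Real.sqrt (∑ h ∈ s, B h ^ 2) :=
        Real.sum_mul_le_sqrt_mul_sqrt s A B
    _ ≤ Real.sqrt (∑' h, A h ^ 2) * Real.sqrt (∑' h, B h ^ 2) := by
        gcongr
        · exact Summable.sum_le_tsum s (fun h _ => sq_nonneg _) hA2_summable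
        · exact Summable.sum_le_tsum s (fun h _ => sq_nonneg _) hB2_summable
    _ ≤ ((d : ℝ) * C ^ ((d : ℝ) / 2)) * Real.sqrt (∑' h, B h ^ 2) :=
        mul_le_mul_of_nonneg_right hkey (Real.sqrt_nonneg _)
    _ = (d : ℝ) * C ^ ((d : ℝ) / 2) *
          Real.sqrt (∑' h : Fin d → ℤ, ‖vhat h‖ ^ 2 * korWeightSq α h) := by
        rw [tsum_congr hB2]

end
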